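/- Deterministic core of Theorem 2 (consistency of the thresholded dendrogram estimator of the number of groups): Let n ≥ 1 be an integer, d : {1,…,n}² → ℝ symmetric, and let {G₁,…,G_{K₀}} be a partition of {1,…,n} into K₀ nonempty groups. Let π ∈ ℝ satisfy max_{1≤k≤K₀} max_{i,j∈G_k, i≠j} d(i,j) ≤ π and min_{1≤k<k′≤K₀} min_{i∈G_k, j∈G_{k′}} d(i,j) > π (the latter vacuous when K₀ = 1). Then, for every choice of tie-breaking of the HAC algorithm, K̂₀(d,π) = K₀. -/
import Mathlib


open Finset

/-- Complete-linkage dissimilarity `Δ(S,S') = max_{i ∈ S, j ∈ S'} d i j`, as an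
extended real (so that the value over an empty index set is `⊥`). -/
noncomputable def cLink {n : ℕ} (d : Fin n → Fin n → ℝ) (S S' : Finset (Fin n)) : EReal :=
  sSup {x : EReal | ∃ i ∈ S, ∃ j ∈ S', x = (d i j : EReal)}

/-- Within-cluster dissimilarity `Δ(C) = max_{i,j ∈ C, i ≠ j} d i j`, as an extended real;
for a singleton (or empty) cluster the value is `⊥`, which is smaller than every real. -/
noncomputable def cDiam {n : ℕ} (d : Fin n → Fin n → ℝ) (C : Finset (Fin n)) : EReal :=
  sSup {x : EReal | ∃ i ∈ C, ∃ j ∈ C, i ≠ j ∧ x = (d i j : EReal)}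

/-- The initial partition of `{1,…,n}` into `n` singleton clusters. -/
def singletonPartition (n : ℕ) : Finset (Finset (Fin n)) :=
  Finset.univ.image fun i : Fin n => ({i} : Finset (Fin n))

/-- `Q` is obtained from `P` by merging one pair of distinct clusters attaining the
minimum of the complete-linkage dissimilarity `Δ` over all pairs of distinct clusters. -/
def IsMergeStep {n : ℕ} (d : Fin n → Fin n → ℝ) (P Q : Finset (Finset (Fin n))) : Prop :=
  ∃ C ∈ P, ∃ C' ∈ P, C ≠ C' ∧
    (∀ D ∈ P, ∀ D' ∈ P, D ≠ D' → cLink d C C' ≤ cLink d D D') ∧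
    Q = insert (C ∪ C') ((P.erase C).erase C')

/-- A run of the complete-linkage HAC algorithm (with an arbitrary choice of
tie-breaking at each step): `P 0` is the singleton partition and for every
`r < n - 1`, `P (r+1)` is obtained from `P r` by a merge step. -/
def IsHACChain {n : ℕ} (d : Fin n → Fin n → ℝ) (P : ℕ → Finset (Finset (Fin n))) : Prop :=
  P 0 = singletonPartition n ∧ ∀ r, r < n - 1 → IsMergeStep d (P r) (P (r + 1))

/-- `G` is a partition of `{1,…,n}` into `K₀` nonempty groups. -/
def IsGroupPartition {n K₀ : ℕ} (G : Fin K₀ → Finset (Fin n)) : Prop :=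
  (∀ k, (G k).Nonempty) ∧ (∀ i : Fin n, ∃ k, i ∈ G k) ∧
    ∀ k k' : Fin K₀, k ≠ k' → Disjoint (G k) (G k')

/-- The partition `G` is `d`-separated: every within-group distance is strictly smaller
than every between-group distance (vacuously true when `K₀ = 1`). -/
def IsSeparated {n K₀ : ℕ} (d : Fin n → Fin n → ℝ) (G : Fin K₀ → Finset (Fin n)) : Prop :=
  ∀ k : Fin K₀, ∀ i ∈ G k, ∀ j ∈ G k, i ≠ j →
    ∀ k₁ k₂ : Fin K₀, k₁ ≠ k₂ → ∀ a ∈ G k₁, ∀ b ∈ G k₂, d i j < d a b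

/-- `A` is a refinement of `B`: every element of `A` is a subset of some element of `B`. -/
def IsRefinement {n : ℕ} (A B : Finset (Finset (Fin n))) : Prop :=
  ∀ C ∈ A, ∃ D ∈ B, C ⊆ D

/-- The thresholded dendrogram estimator of the number of groups:
`K̂₀(d,π) = min { K ∈ {1,…,n} : every cluster of the HAC partition into K clusters has
within-cluster dissimilarity at most π }`. -/
noncomputable def Khat {n : ℕ} (d : Fin n → Fin n → ℝ)
    (P : ℕ → Finset (Finset (Fin n))) (π : ℝ) : ℕ :=
  sInf {K : ℕ | 1 ≤ K ∧ K ≤ n ∧ ∀ C ∈ P (n - K), cDiam d C ≤ (π : EReal)}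


open Finset

section Aux

variable {n : ℕ}

/-- `P` is a partition of `Fin n` into nonempty, pairwise disjoint clusters. -/
def IsPart {n : ℕ} (P : Finset (Finset (Fin n))) : Prop :=
  (∀ C ∈ P, C.Nonempty) ∧ (∀ C ∈ P, ∀ C' ∈ P, C ≠ C' → Disjoint C C') ∧
    (∀ i : Fin n, ∃ C ∈ P, i ∈ C)

lemma cLink_le_of_forall {d : Fin n → Fin n → ℝ} {S S' : Finset (Fin n)} {π : ℝ}
    (h : ∀ i ∈ S, ∀ j ∈ S', d i j ≤ π) : cLink d S S' ≤ (π : EReal) := by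
  apply sSup_le
  rintro x ⟨i, hi, j, hj, rfl⟩
  exact_mod_cast h i hi j hj

lemma le_cLink {d : Fin n → Fin n → ℝ} {S S' : Finset (Fin n)} {i j : Fin n}
    (hi : i ∈ S) (hj : j ∈ S') : (d i j : EReal) ≤ cLink d S S' :=
  le_sSup ⟨i, hi, j, hj, rfl⟩

lemma cDiam_le_of_forall {d : Fin n → Fin n → ℝ} {C : Finset (Fin n)} {π : ℝ}
    (h : ∀ i ∈ C, ∀ j ∈ C, i ≠ j → d i j ≤ π) : cDiam d C ≤ (π : EReal) := by
  apply sSup_le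
  rintro x ⟨i, hi, j, hj, hij, rfl⟩
  exact_mod_cast h i hi j hj hij

lemma le_cDiam {d : Fin n → Fin n → ℝ} {C : Finset (Fin n)} {i j : Fin n}
    (hi : i ∈ C) (hj : j ∈ C) (hij : i ≠ j) : (d i j : EReal) ≤ cDiam d C :=
  le_sSup ⟨i, hi, j, hj, hij, rfl⟩

lemma singletonPartition_isPart : IsPart (singletonPartition n) := by
  refine ⟨?_, ?_, ?_⟩
  · intro C hC
    simp only [singletonPartition, mem_image, mem_univ, true_and] at hC
    obtain ⟨i, rfl⟩ := hC
    exact ⟨i, mem_singleton_self i⟩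
  · intro C hC C' hC' hne
    simp only [singletonPartition, mem_image, mem_univ, true_and] at hC hC'
    obtain ⟨i, rfl⟩ := hC
    obtain ⟨j, rfl⟩ := hC'
    simp only [disjoint_singleton]
    intro h; exact hne (by rw [h])
  · intro i
    exact ⟨{i}, by simp [singletonPartition], mem_singleton_self i⟩

lemma singletonPartition_card : (singletonPartition n).card = n := by
  rw [singletonPartition, Finset.card_image_of_injective _ (fun a b h => by
    simpa using h)]
  simp

lemma union_notMem {P : Finset (Finset (Fin n))} (hP : IsPart P)
    {C C' : Finset (Fin n)} (hC : C ∈ P) (hC' : C' ∈ P) (hne : C ≠ C') :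
    C ∪ C' ∉ P := by
  intro hmem
  by_cases h : C ∪ C' = C
  · have hsub : C' ⊆ C := by rw [← h]; exact subset_union_right
    have hdis := hP.2.1 C hC C' hC' hne
    obtain ⟨x, hx⟩ := hP.1 C' hC'
    exact Finset.disjoint_left.1 hdis (hsub hx) hx
  · have hdis := hP.2.1 _ hmem C hC h
    obtain ⟨x, hx⟩ := hP.1 C hC
    exact Finset.disjoint_left.1 hdis (mem_union_left _ hx) hx

lemma mergeStep_isPart {d : Fin n → Fin n → ℝ} {P Q : Finset (Finset (Fin n))}
    (hP : IsPart P) (hm : IsMergeStep d P Q) : IsPart Q ∧ Q.card = P.card - 1 := by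
  obtain ⟨C, hC, C', hC', hne, _, rfl⟩ := hm
  have hunot := union_notMem hP hC hC' hne
  have hcc' : C' ∈ P.erase C := mem_erase.2 ⟨fun h => hne h.symm, hC'⟩
  constructor
  · refine ⟨?_, ?_, ?_⟩
    · intro D hD
      rcases mem_insert.1 hD with rfl | hD
      · obtain ⟨x, hx⟩ := hP.1 C hC
        exact ⟨x, mem_union_left _ hx⟩
      · exact hP.1 D (mem_of_mem_erase (mem_of_mem_erase hD))
    · intro D hD D' hD' hDD'
      rcases mem_insert.1 hD with rfl | hD <;> rcases mem_insert.1 hD' with rfl | hD'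
      · exact absurd rfl hDD'
      · have hD'P := mem_of_mem_erase (mem_of_mem_erase hD')
        have h1 : D' ≠ C := (mem_erase.1 (mem_of_mem_erase hD')).1
        have h2 : D' ≠ C' := (mem_erase.1 hD').1
        exact Finset.disjoint_union_left.2
          ⟨(hP.2.1 D' hD'P C hC h1).symm, (hP.2.1 D' hD'P C' hC' h2).symm⟩
      · have hDP := mem_of_mem_erase (mem_of_mem_erase hD)
        have h1 : D ≠ C := (mem_erase.1 (mem_of_mem_erase hD)).1
        have h2 : D ≠ C' := (mem_erase.1 hD).1
        exact Finset.disjoint_union_right.2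
          ⟨hP.2.1 D hDP C hC h1, hP.2.1 D hDP C' hC' h2⟩
      · exact hP.2.1 D (mem_of_mem_erase (mem_of_mem_erase hD))
          D' (mem_of_mem_erase (mem_of_mem_erase hD')) hDD'
    · intro i
      obtain ⟨D, hD, hiD⟩ := hP.2.2 i
      by_cases h1 : D = C
      · exact ⟨C ∪ C', mem_insert_self _ _, mem_union_left _ (h1 ▸ hiD)⟩
      by_cases h2 : D = C'
      · exact ⟨C ∪ C', mem_insert_self _ _, mem_union_right _ (h2 ▸ hiD)⟩
      · exact ⟨D, mem_insert_of_mem (mem_erase.2 ⟨h2, mem_erase.2 ⟨h1, hD⟩⟩), hiD⟩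
  · have hnotmem : C ∪ C' ∉ (P.erase C).erase C' := fun h =>
      hunot (mem_of_mem_erase (mem_of_mem_erase h))
    rw [Finset.card_insert_of_notMem hnotmem, Finset.card_erase_of_mem hcc',
      Finset.card_erase_of_mem hC]
    have h2 : 2 ≤ P.card := Finset.one_lt_card.2 ⟨C, hC, C', hC', hne⟩
    omega

lemma chain_isPart {d : Fin n → Fin n → ℝ} {P : ℕ → Finset (Finset (Fin n))}
    (hP : IsHACChain d P) : ∀ r, r ≤ n - 1 → IsPart (P r) ∧ (P r).card = n - r := by
  intro r
  induction r with
  | zero => intro _; rw [hP.1]; exact ⟨singletonPartition_isPart, by simp [singletonPartition_card]⟩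
  | succ r ih =>
    intro hr
    have hr' : r < n - 1 := by omega
    have ihr := ih (by omega)
    obtain ⟨h1, h2⟩ := mergeStep_isPart ihr.1 (hP.2 r hr')
    exact ⟨h1, by rw [h2, ihr.2]; omega⟩

end Aux

section Main

variable {n K₀ : ℕ}

lemma chain_refines (hn : 1 ≤ n)
    (d : Fin n → Fin n → ℝ)
    (G : Fin K₀ → Finset (Fin n)) (hG : IsGroupPartition G)
    (hK₀n : K₀ ≤ n) (hK₀ : 1 ≤ K₀)
    (π : ℝ)
    (hwithin : ∀ k : Fin K₀, ∀ i ∈ G k, ∀ j ∈ G k, i ≠ j → d i j ≤ π)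
    (hbetween : ∀ k k' : Fin K₀, k ≠ k' → ∀ i ∈ G k, ∀ j ∈ G k', π < d i j)
    (P : ℕ → Finset (Finset (Fin n))) (hP : IsHACChain d P) :
    ∀ r, r ≤ n - K₀ → ∀ C ∈ P r, ∃ k, C ⊆ G k := by
  haveI : Nonempty (Fin K₀) := ⟨⟨0, hK₀⟩⟩
  intro r
  induction r with
  | zero =>
    intro _ C hC
    rw [hP.1] at hC
    simp only [singletonPartition, mem_image, mem_univ, true_and] at hC
    obtain ⟨i, rfl⟩ := hC
    obtain ⟨k, hk⟩ := hG.2.1 i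
    exact ⟨k, by simpa using hk⟩
  | succ r ih =>
    intro hr
    have hr1 : r ≤ n - K₀ := by omega
    have ih' := ih hr1
    have hmerge := hP.2 r (by omega)
    have hpart := (chain_isPart hP r (by omega)).1
    have hcard : (P r).card = n - r := (chain_isPart hP r (by omega)).2
    obtain ⟨C, hC, C', hC', hne, hmin, hQ⟩ := hmerge
    -- choose a group for each cluster of P r
    choose! g hg using ih'
    -- pigeonhole: two distinct clusters in the same group
    have hlt : (Finset.univ : Finset (Fin K₀)).card < (P r).card := by
      rw [hcard]; simp; omega
    obtain ⟨D, hD, D', hD', hDD', hgDD'⟩ :=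
      Finset.exists_ne_map_eq_of_card_lt_of_maps_to hlt
        (fun C _ => Finset.mem_univ (g C))
    -- cLink D D' ≤ π
    have hDle : cLink d D D' ≤ (π : EReal) := by
      apply cLink_le_of_forall
      intro i hi j hj
      have hij : i ≠ j := by
        intro h
        exact Finset.disjoint_left.1 (hpart.2.1 D hD D' hD' hDD') hi (h ▸ hj)
      exact hwithin (g D) i (hg D hD hi) j (hgDD' ▸ hg D' hD' hj) hij
    have hCle : cLink d C C' ≤ (π : EReal) :=
      le_trans (hmin D hD D' hD' hDD') hDle
    -- the merged pair lies in one group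
    have hsame : g C = g C' := by
      by_contra hgne
      obtain ⟨i, hi⟩ := hpart.1 C hC
      obtain ⟨j, hj⟩ := hpart.1 C' hC'
      have hd : π < d i j :=
        hbetween (g C) (g C') hgne i (hg C hC hi) j (hg C' hC' hj)
      have : (π : EReal) < cLink d C C' :=
        lt_of_lt_of_le (by exact_mod_cast hd) (le_cLink hi hj)
      exact absurd hCle (not_le.2 this)
    intro E hE
    rw [hQ] at hE
    rcases mem_insert.1 hE with rfl | hE
    · exact ⟨g C, Finset.union_subset (hg C hC) (hsame ▸ hg C' hC')⟩
    · exact ⟨g _, hg _ (mem_of_mem_erase (mem_of_mem_erase hE))⟩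

end Main

theorem khat_recovers_K0' {n K₀ : ℕ} (hn : 1 ≤ n)
    (d : Fin n → Fin n → ℝ) (_hsym : ∀ i j, d i j = d j i)
    (G : Fin K₀ → Finset (Fin n)) (hG : IsGroupPartition G)
    (π : ℝ)
    (hwithin : ∀ k : Fin K₀, ∀ i ∈ G k, ∀ j ∈ G k, i ≠ j → d i j ≤ π)
    (hbetween : ∀ k k' : Fin K₀, k ≠ k' → ∀ i ∈ G k, ∀ j ∈ G k', π < d i j)
    (P : ℕ → Finset (Finset (Fin n))) (hP : IsHACChain d P) :
    Khat d P π = K₀ := by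
  -- representatives of the groups
  have hrep : ∀ k, (G k).Nonempty := hG.1
  set rep : Fin K₀ → Fin n := fun k => (hrep k).choose with hrepdef
  have hrepmem : ∀ k, rep k ∈ G k := fun k => (hrep k).choose_spec
  have hrepinj : Function.Injective rep := by
    intro k k' h
    by_contra hne
    exact Finset.disjoint_left.1 (hG.2.2 k k' hne) (hrepmem k) (h ▸ hrepmem k')
  have hK₀ : 1 ≤ K₀ := by
    obtain ⟨k, _⟩ := hG.2.1 ⟨0, hn⟩
    exact k.pos
  have hK₀n : K₀ ≤ n := by
    have := Fintype.card_le_of_injective rep hrepinj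
    simpa using this
  -- K₀ belongs to the defining set of Khat
  have hmem : K₀ ∈ {K : ℕ | 1 ≤ K ∧ K ≤ n ∧
      ∀ C ∈ P (n - K), cDiam d C ≤ (π : EReal)} := by
    refine ⟨hK₀, hK₀n, ?_⟩
    intro C hC
    obtain ⟨k, hk⟩ := chain_refines hn d G hG hK₀n hK₀ π hwithin hbetween P hP
      (n - K₀) le_rfl C hC
    exact cDiam_le_of_forall fun i hi j hj hij =>
      hwithin k i (hk hi) j (hk hj) hij
  -- every member of the set is ≥ K₀
  have hlb : ∀ K ∈ {K : ℕ | 1 ≤ K ∧ K ≤ n ∧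
      ∀ C ∈ P (n - K), cDiam d C ≤ (π : EReal)}, K₀ ≤ K := by
    rintro K ⟨hK1, hKn, hKall⟩
    by_contra hlt
    push_neg at hlt
    have hcard : (P (n - K)).card = K := by
      have := (chain_isPart hP (n - K) (by omega)).2
      rw [this]; omega
    have hpart := (chain_isPart hP (n - K) (by omega)).1
    -- each representative lies in some cluster
    choose f hf hfm using fun k => hpart.2.2 (rep k)
    have hltcard : (P (n - K)).card < (Finset.univ : Finset (Fin K₀)).card := by
      rw [hcard]; simpa using hlt
    obtain ⟨k₁, _, k₂, _, hk12, hfk⟩ :=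
      Finset.exists_ne_map_eq_of_card_lt_of_maps_to hltcard
        (fun k _ => hf k)
    have hrne : rep k₁ ≠ rep k₂ := fun h => hk12 (hrepinj h)
    have hd : π < d (rep k₁) (rep k₂) :=
      hbetween k₁ k₂ hk12 _ (hrepmem k₁) _ (hrepmem k₂)
    have : (π : EReal) < cDiam d (f k₁) :=
      lt_of_lt_of_le (by exact_mod_cast hd)
        (le_cDiam (hfm k₁) (hfk ▸ hfm k₂) hrne)
    exact absurd (hKall (f k₁) (hf k₁)) (not_le.2 this)
  exact le_antisymm (Nat.sInf_le hmem) (le_csInf ⟨K₀, hmem⟩ hlb)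


/-- **Deterministic core of Theorem 2.** If the threshold `π` lies weakly above every
within-group distance and strictly below every between-group distance (the latter being
vacuous when `K₀ = 1`), then for every tie-breaking of the HAC algorithm the thresholded
dendrogram estimator recovers the number of groups: `K̂₀(d,π) = K₀`. -/
theorem khat_recovers_K0 {n K₀ : ℕ} (hn : 1 ≤ n)
    (d : Fin n → Fin n → ℝ) (hsym : ∀ i j, d i j = d j i)
    (G : Fin K₀ → Finset (Fin n)) (hG : IsGroupPartition G)
    (π : ℝ)
    (hwithin : ∀ k : Fin K₀, ∀ i ∈ G k, ∀ j ∈ G k, i ≠ j → d i j ≤ π)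
    (hbetween : ∀ k k' : Fin K₀, k ≠ k' → ∀ i ∈ G k, ∀ j ∈ G k', π < d i j)
    (P : ℕ → Finset (Finset (Fin n))) (hP : IsHACChain d P) :
    Khat d P π = K₀ := by
  exact khat_recovers_K0' hn d hsym G hG π hwithin hbetween P hP
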